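/- For any two infinite types (index sets) κ and λ, the free groups F_κ and F_λ are ≡ᵇᶠ_α-equivalent for every ordinal α (equivalently, Duplicator wins the back-and-forth game of any ordinal length between F_κ and F_λ). -/

import Mathlib

/-- Tuples `g` and `h` satisfy the same group-word equations (equal quantifier-free types). -/
def WordEq {ι : Type*} (G H : Type*) [Group G] [Group H]
    (g : ι → G) (h : ι → H) : Prop :=
  ∀ w : FreeGroup ι, FreeGroup.lift g w = 1 ↔ FreeGroup.lift h w = 1

/-- The standard symmetric back-and-forth relation of rank `α` between groups with
distinguished tuples. -/
def GBF (G H : Type*) [Group G] [Group H]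
    (α : Ordinal) (n : ℕ) (g : Fin n → G) (h : Fin n → H) : Prop :=
  (α = 0 ∧ WordEq G H g h) ∨
  (α ≠ 0 ∧
    (∀ β < α, ∀ (m : ℕ) (c : Fin m → G), ∃ d : Fin m → H,
      GBF G H β (n + m) (Fin.append g c) (Fin.append h d)) ∧
    (∀ β < α, ∀ (m : ℕ) (d : Fin m → H), ∃ c : Fin m → G,
      GBF G H β (n + m) (Fin.append g c) (Fin.append h d)))
termination_by α

/-! ### Auxiliary machinery -/

/-- The invariant: both tuples are images of a common tuple of words over a common finite
generating alphabet, along injective maps of generators. -/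
def FGInv {κ lam : Type*} (n : ℕ) (g : Fin n → FreeGroup κ) (h : Fin n → FreeGroup lam) : Prop :=
  ∃ (k : ℕ) (a : Fin k → κ) (b : Fin k → lam) (w : Fin n → FreeGroup (Fin k)),
    Function.Injective a ∧ Function.Injective b ∧
      (∀ i, g i = FreeGroup.map a (w i)) ∧ ∀ i, h i = FreeGroup.map b (w i)

lemma FGInv.symm {κ lam : Type*} {n : ℕ} {g : Fin n → FreeGroup κ} {h : Fin n → FreeGroup lam}
    (H : FGInv n g h) : FGInv n h g := by
  obtain ⟨k, a, b, w, ha, hb, hg, hh⟩ := H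
  exact ⟨k, b, a, w, hb, ha, hh, hg⟩

lemma freeGroup_map_injective {α β : Type*} {f : α → β} (hf : Function.Injective f) :
    Function.Injective (FreeGroup.map f : FreeGroup α → FreeGroup β) := by
  rcases isEmpty_or_nonempty α with hα | hα
  · have key : ∀ x : FreeGroup α, x = 1 := by
      intro x
      induction x using FreeGroup.induction_on with
      | C1 => rfl
      | of a => exact hα.elim a
      | inv_of a ih => rw [ih, inv_one]
      | mul x y ihx ihy => rw [ihx, ihy, one_mul]
    intro x y _
    rw [key x, key y]
  · obtain ⟨r, hr⟩ := hf.hasLeftInverse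
    intro x y hxy
    have h2 := congrArg (FreeGroup.map r) hxy
    rw [FreeGroup.map.comp, FreeGroup.map.comp,
      show r ∘ f = id from funext hr, FreeGroup.map.id, FreeGroup.map.id] at h2
    exact h2

lemma lift_eq_map_comp {ι κ : Type*} {n : ℕ} (a : ι → κ) (w : Fin n → FreeGroup ι) :
    FreeGroup.lift (fun i => FreeGroup.map a (w i)) =
      (FreeGroup.map a).comp (FreeGroup.lift w) := by
  apply FreeGroup.ext_hom
  intro i
  simp

lemma FGInv.wordEq {κ lam : Type*} {n : ℕ} {g : Fin n → FreeGroup κ} {h : Fin n → FreeGroup lam}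
    (H : FGInv n g h) : WordEq (FreeGroup κ) (FreeGroup lam) g h := by
  obtain ⟨k, a, b, w, ha, hb, hg, hh⟩ := H
  intro z
  have hg' : g = fun i => FreeGroup.map a (w i) := funext hg
  have hh' : h = fun i => FreeGroup.map b (w i) := funext hh
  rw [hg', hh', lift_eq_map_comp, lift_eq_map_comp]
  simp only [MonoidHom.comp_apply]
  rw [show (1 : FreeGroup κ) = FreeGroup.map a 1 from (map_one _).symm,
    show (1 : FreeGroup lam) = FreeGroup.map b 1 from (map_one _).symm]
  constructor
  · intro hz
    have := freeGroup_map_injective ha hz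
    rw [this]
  · intro hz
    have := freeGroup_map_injective hb hz
    rw [this]

/-- Every element of a free group is supported on a finite set of generators. -/
lemma exists_finset_support {κ : Type*} (x : FreeGroup κ) :
    ∃ S : Finset κ, x ∈ Set.range (FreeGroup.map (Subtype.val : {a // a ∈ S} → κ)) := by
  induction x using FreeGroup.induction_on with
  | C1 => exact ⟨∅, 1, map_one _⟩
  | of a => exact ⟨{a}, FreeGroup.of ⟨a, Finset.mem_singleton_self a⟩, rfl⟩
  | inv_of a ih =>
    obtain ⟨S, y, hy⟩ := ih
    exact ⟨S, y⁻¹, by rw [map_inv, hy]⟩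
  | mul x y ihx ihy =>
    obtain ⟨S, u, hu⟩ := ihx
    obtain ⟨S', v, hv⟩ := ihy
    classical
    refine ⟨S ∪ S',
      FreeGroup.map (fun t : {a // a ∈ S} => (⟨t.1, Finset.mem_union_left _ t.2⟩ : {a // a ∈ S ∪ S'})) u *
      FreeGroup.map (fun t : {a // a ∈ S'} => (⟨t.1, Finset.mem_union_right _ t.2⟩ : {a // a ∈ S ∪ S'})) v, ?_⟩
    rw [map_mul, FreeGroup.map.comp, FreeGroup.map.comp]
    exact congrArg₂ (· * ·) hu hv

/-- An injective map on a finite alphabet into an infinite set extends along any injection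
of finite alphabets. -/
lemma exists_injective_extension {ι ι' lam : Type*} [Finite ι'] [Infinite lam]
    (j : ι → ι') (hj : Function.Injective j) (b : ι → lam) (hb : Function.Injective b) :
    ∃ b' : ι' → lam, Function.Injective b' ∧ b' ∘ j = b := by
  classical
  have hι : Finite ι := Finite.of_injective j hj
  have hfin : (Set.range b).Finite := Set.finite_range b
  have hinf : (Set.range b)ᶜ.Infinite := hfin.infinite_compl
  have : Infinite ↥((Set.range b)ᶜ) := hinf.to_subtype
  obtain ⟨e1⟩ := nonempty_embedding_nat {x : ι' // ¬ ∃ i, j i = x}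
  let e : {x : ι' // ¬ ∃ i, j i = x} ↪ ↥((Set.range b)ᶜ) := e1.trans (Infinite.natEmbedding _)
  refine ⟨fun x => if hx : ∃ i, j i = x then b hx.choose else (e ⟨x, hx⟩ : ↥((Set.range b)ᶜ)), ?_, ?_⟩
  · intro x y hxy
    dsimp only at hxy
    by_cases hx : ∃ i, j i = x <;> by_cases hy : ∃ i, j i = y
    · rw [dif_pos hx, dif_pos hy] at hxy
      have := hb hxy
      rw [← hx.choose_spec, ← hy.choose_spec, this]
    · rw [dif_pos hx, dif_neg hy] at hxy
      exact absurd ⟨hx.choose, hxy⟩ (e ⟨y, hy⟩).2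
    · rw [dif_neg hx, dif_pos hy] at hxy
      exact absurd ⟨hy.choose, hxy.symm⟩ (e ⟨x, hx⟩).2
    · rw [dif_neg hx, dif_neg hy] at hxy
      have h2 : e ⟨x, hx⟩ = e ⟨y, hy⟩ := Subtype.ext hxy
      have h3 := e.injective h2
      exact congrArg Subtype.val h3
  · funext i
    have hx : ∃ i', j i' = j i := ⟨i, rfl⟩
    simp only [Function.comp_apply, dif_pos hx]
    congr 1
    exact hj hx.choose_spec

/-- The key extension step: the invariant can be extended by any new tuple on the `κ` side,
matched by a suitable tuple on the `lam` side. -/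
lemma FGInv.extend {κ lam : Type*} [Infinite lam] {n : ℕ} {g : Fin n → FreeGroup κ}
    {h : Fin n → FreeGroup lam} (H : FGInv n g h) (m : ℕ) (c : Fin m → FreeGroup κ) :
    ∃ d : Fin m → FreeGroup lam, FGInv (n + m) (Fin.append g c) (Fin.append h d) := by
  classical
  obtain ⟨k, a, b, w, ha, hb, hg, hh⟩ := H
  choose S hS using fun p => exists_finset_support (c p)
  set T : Finset κ := (Finset.univ.sup S) ∪ Finset.univ.image a with hT
  -- each c p is in the range of map val_T
  have hcT : ∀ p, c p ∈ Set.range (FreeGroup.map (Subtype.val : {x // x ∈ T} → κ)) := by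
    intro p
    obtain ⟨y, hy⟩ := hS p
    have hsub : S p ⊆ T := by
      intro x hx
      exact Finset.mem_union_left _ ((Finset.le_sup (Finset.mem_univ p) : S p ⊆ _) hx)
    refine ⟨FreeGroup.map (fun t : {x // x ∈ S p} => (⟨t.1, hsub t.2⟩ : {x // x ∈ T})) y, ?_⟩
    rw [FreeGroup.map.comp]
    exact hy
  set k' : ℕ := Fintype.card {x // x ∈ T} with hk'
  let e : {x // x ∈ T} ≃ Fin k' := Fintype.equivFin _
  let a' : Fin k' → κ := fun i => (e.symm i).1
  have ha' : Function.Injective a' := fun x y hxy => by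
    have := Subtype.ext hxy (p := fun x => x ∈ T)
    exact e.symm.injective this
  have haT : ∀ i, a i ∈ T := fun i =>
    Finset.mem_union_right _ (Finset.mem_image_of_mem a (Finset.mem_univ i))
  let j : Fin k → Fin k' := fun i => e ⟨a i, haT i⟩
  have haj : a' ∘ j = a := by
    funext i
    show (e.symm (e ⟨a i, haT i⟩)).1 = a i
    rw [Equiv.symm_apply_apply]
  have hj : Function.Injective j := by
    intro x y hxy
    have := e.injective hxy
    exact ha (congrArg Subtype.val this)
  obtain ⟨b', hb', hbj⟩ := exists_injective_extension j hj b hb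
  -- words for the new constants
  have hcu : ∀ p, ∃ u : FreeGroup (Fin k'), FreeGroup.map a' u = c p := by
    intro p
    obtain ⟨y, hy⟩ := hcT p
    refine ⟨FreeGroup.map e y, ?_⟩
    rw [FreeGroup.map.comp]
    have : a' ∘ e = (Subtype.val : {x // x ∈ T} → κ) := by
      funext t
      show (e.symm (e t)).1 = t.1
      rw [Equiv.symm_apply_apply]
    rw [this]
    exact hy
  choose u hu using hcu
  refine ⟨fun p => FreeGroup.map b' (u p), k', a', b',
    Fin.append (fun i => FreeGroup.map j (w i)) u, ha', hb', ?_, ?_⟩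
  · intro i
    refine Fin.addCases (motive := fun i => Fin.append g c i =
      FreeGroup.map a' (Fin.append (fun i => FreeGroup.map j (w i)) u i)) ?_ ?_ i
    · intro p
      rw [Fin.append_left, Fin.append_left, FreeGroup.map.comp, haj]
      exact hg p
    · intro p
      rw [Fin.append_right, Fin.append_right]
      exact (hu p).symm
  · intro i
    refine Fin.addCases (motive := fun i => Fin.append h (fun p => FreeGroup.map b' (u p)) i =
      FreeGroup.map b' (Fin.append (fun i => FreeGroup.map j (w i)) u i)) ?_ ?_ i
    · intro p
      rw [Fin.append_left, Fin.append_left, FreeGroup.map.comp, hbj]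
      exact hh p
    · intro p
      rw [Fin.append_right, Fin.append_right]

/-- The invariant implies the back-and-forth relation at every rank. -/
lemma fginv_gbf {κ lam : Type*} [Infinite κ] [Infinite lam] (α : Ordinal) :
    ∀ (n : ℕ) (g : Fin n → FreeGroup κ) (h : Fin n → FreeGroup lam), FGInv n g h →
      GBF (FreeGroup κ) (FreeGroup lam) α n g h := by
  induction α using Ordinal.induction with
  | h α ih =>
    intro n g h hInv
    rcases eq_or_ne α 0 with rfl | hα
    · rw [GBF]
      exact Or.inl ⟨rfl, hInv.wordEq⟩
    · rw [GBF]
      refine Or.inr ⟨hα, ?_, ?_⟩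
      · intro β hβ m c
        obtain ⟨d, hd⟩ := hInv.extend m c
        exact ⟨d, ih β hβ _ _ _ hd⟩
      · intro β hβ m d
        obtain ⟨c, hc⟩ := hInv.symm.extend m d
        exact ⟨c, ih β hβ _ _ _ hc.symm⟩

/-- Free groups on infinite generating sets are back-and-forth equivalent at every rank. -/
theorem freeGroup_infinite_gbf (κ lam : Type*) [Infinite κ] [Infinite lam]
    (α : Ordinal) :
    GBF (FreeGroup κ) (FreeGroup lam) α 0 (fun i => i.elim0) (fun i => i.elim0) := by
  apply fginv_gbf
  exact ⟨0, Fin.elim0, Fin.elim0, Fin.elim0, fun x => x.elim0, fun x => x.elim0,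
    fun i => i.elim0, fun i => i.elim0⟩
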